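/- Suppose 0 < α < 1. Then for every integer k ≥ m̂, the asymptotic expected complementary cumulative in-degree distribution satisfies F̄_∞(k) = 1 − Σ_{j=m̂}^{k−1} P_∞(j) = Γ( (m̂ + m·(1 + m + m̂ − α·m))/(m·α) )·Γ( k + (m + m̂)·(1 − α)/α ) / ( Γ( (m̂ + m·(1 − α))/α )·Γ( (m̂ + m·(m + m̂ + k·α − (m + m̂)·α + 1))/(m·α) ) ). -/

import Mathlib

private lemma ccdf_aux (P : ℕ → ℝ) (mh : ℕ) (c e : ℝ) (hc : 0 < c) (he : 0 < e)
    (hbase : P mh = e / ((mh : ℝ) + c + e))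
    (hrec : ∀ k : ℕ, mh < k →
      P k = (((k : ℝ) - 1 + c) / ((k : ℝ) + c + e)) * P (k - 1)) :
    ∀ k : ℕ, mh ≤ k →
      P k = Real.Gamma ((mh : ℝ) + c + e) * Real.Gamma ((k : ℝ) + c) /
              (Real.Gamma ((mh : ℝ) + c) * Real.Gamma ((k : ℝ) + c + e)) *
            (e / ((k : ℝ) + c + e))
      ∧ 1 - ∑ j ∈ Finset.Ico mh k, P j =
          Real.Gamma ((mh : ℝ) + c + e) * Real.Gamma ((k : ℝ) + c) /
            (Real.Gamma ((mh : ℝ) + c) * Real.Gamma ((k : ℝ) + c + e)) := by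
  intro k hk
  induction k, hk using Nat.le_induction with
  | base =>
    have g1 : 0 < (mh : ℝ) + c := by positivity
    have g2 : 0 < (mh : ℝ) + c + e := by positivity
    have G1 := (Real.Gamma_pos_of_pos g1).ne'
    have G2 := (Real.Gamma_pos_of_pos g2).ne'
    constructor
    · rw [hbase]; field_simp
    · rw [Finset.Ico_self, Finset.sum_empty]; field_simp; ring
  | succ k hk ih =>
    have hk0 : (0 : ℝ) ≤ (k : ℝ) := Nat.cast_nonneg k
    have hkc : 0 < (k : ℝ) + c := by positivity
    have hke : 0 < (k : ℝ) + c + e := by positivity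
    have hk1e : 0 < (k : ℝ) + 1 + c + e := by positivity
    have g1 : 0 < (mh : ℝ) + c := by positivity
    have g2 : 0 < (mh : ℝ) + c + e := by positivity
    have G1 := (Real.Gamma_pos_of_pos g1).ne'
    have G2 := (Real.Gamma_pos_of_pos g2).ne'
    have Gk := (Real.Gamma_pos_of_pos hkc).ne'
    have Gke := (Real.Gamma_pos_of_pos hke).ne'
    have e1 : Real.Gamma ((k : ℝ) + 1 + c) = ((k : ℝ) + c) * Real.Gamma ((k : ℝ) + c) := by
      rw [show (k : ℝ) + 1 + c = ((k : ℝ) + c) + 1 by ring, Real.Gamma_add_one hkc.ne']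
    have e2 : Real.Gamma ((k : ℝ) + 1 + c + e)
        = ((k : ℝ) + c + e) * Real.Gamma ((k : ℝ) + c + e) := by
      rw [show (k : ℝ) + 1 + c + e = ((k : ℝ) + c + e) + 1 by ring,
        Real.Gamma_add_one hke.ne']
    constructor
    · have h := hrec (k + 1) (by omega)
      rw [Nat.add_sub_cancel] at h
      push_cast
      rw [h, ih.1, e1, e2]
      push_cast
      field_simp
      ring
    · rw [Finset.sum_Ico_succ_top hk]
      push_cast
      rw [e1, e2, show (1 : ℝ) - (∑ j ∈ Finset.Ico mh k, P j + P k)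
          = (1 - ∑ j ∈ Finset.Ico mh k, P j) - P k by ring, ih.2, ih.1]
      field_simp
      ring

theorem ccdf_alpha_mid
    (m mh : ℕ) (hm : 1 ≤ m)
    (α : ℝ) (hα : α ∈ Set.Icc (0 : ℝ) 1)
    (P : ℕ → ℝ)
    (hbase : P mh = ((m : ℝ) + (mh : ℝ)) /
      ((m : ℝ) ^ 2 + (m : ℝ) * (mh : ℝ) + (m : ℝ) + (mh : ℝ) - α * (m : ℝ) ^ 2))
    (hrec : ∀ k : ℕ, mh < k →
      P k = ((α * ((k : ℝ) * (m : ℝ) - (m : ℝ) ^ 2 - (m : ℝ) * (mh : ℝ) - (m : ℝ))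
                + (m : ℝ) ^ 2 + (m : ℝ) * (mh : ℝ)) /
             (α * ((k : ℝ) * (m : ℝ) - (m : ℝ) ^ 2 - (m : ℝ) * (mh : ℝ))
                + (m : ℝ) ^ 2 + (m : ℝ) * (mh : ℝ) + (m : ℝ) + (mh : ℝ))) * P (k - 1))
    (hα0 : 0 < α) (hα1 : α < 1) :
    ∀ k : ℕ, mh ≤ k →
      1 - ∑ j ∈ Finset.Ico mh k, P j =
        Real.Gamma (((mh : ℝ) + (m : ℝ) * (1 + (m : ℝ) + (mh : ℝ) - α * (m : ℝ)))
            / ((m : ℝ) * α))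
          * Real.Gamma ((k : ℝ) + ((m : ℝ) + (mh : ℝ)) * (1 - α) / α) /
        (Real.Gamma (((mh : ℝ) + (m : ℝ) * (1 - α)) / α)
          * Real.Gamma (((mh : ℝ) + (m : ℝ) * ((m : ℝ) + (mh : ℝ) + (k : ℝ) * α
              - ((m : ℝ) + (mh : ℝ)) * α + 1)) / ((m : ℝ) * α))) := by
  have hm1 : (1 : ℝ) ≤ (m : ℝ) := by exact_mod_cast hm
  have hM : (0 : ℝ) < (m : ℝ) := by linarith
  have hH : (0 : ℝ) ≤ (mh : ℝ) := Nat.cast_nonneg mh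
  have hMα : (0 : ℝ) < (m : ℝ) * α := mul_pos hM hα0
  set c : ℝ := ((m : ℝ) + (mh : ℝ)) * (1 - α) / α with hcdef
  set e : ℝ := ((m : ℝ) + (mh : ℝ)) / ((m : ℝ) * α) with hedef
  have hc : 0 < c := by
    rw [hcdef]; apply div_pos (by nlinarith) hα0
  have he : 0 < e := by
    rw [hedef]; apply div_pos (by linarith) hMα
  -- transformed base case
  have hbase' : P mh = e / ((mh : ℝ) + c + e) := by
    have hden : (m : ℝ) ^ 2 + (m : ℝ) * (mh : ℝ) + (m : ℝ) + (mh : ℝ) - α * (m : ℝ) ^ 2 ≠ 0 := by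
      nlinarith
    have hde : (0 : ℝ) < (mh : ℝ) + c + e := by positivity
    rw [hbase, div_eq_div_iff hden hde.ne', hcdef, hedef]
    field_simp
    ring
  -- transformed recurrence
  have hrec' : ∀ k : ℕ, mh < k →
      P k = (((k : ℝ) - 1 + c) / ((k : ℝ) + c + e)) * P (k - 1) := by
    intro k hk
    have hnum : α * ((k : ℝ) * (m : ℝ) - (m : ℝ) ^ 2 - (m : ℝ) * (mh : ℝ) - (m : ℝ))
        + (m : ℝ) ^ 2 + (m : ℝ) * (mh : ℝ) = (m : ℝ) * α * ((k : ℝ) - 1 + c) := by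
      rw [hcdef]; field_simp; ring
    have hden : α * ((k : ℝ) * (m : ℝ) - (m : ℝ) ^ 2 - (m : ℝ) * (mh : ℝ))
        + (m : ℝ) ^ 2 + (m : ℝ) * (mh : ℝ) + (m : ℝ) + (mh : ℝ)
        = (m : ℝ) * α * ((k : ℝ) + c + e) := by
      rw [hcdef, hedef]; field_simp; ring
    rw [hrec k hk, hnum, hden, mul_div_mul_left _ _ hMα.ne']
  have key := ccdf_aux P mh c e hc he hbase' hrec'
  intro k hk
  have eA : ((mh : ℝ) + (m : ℝ) * (1 + (m : ℝ) + (mh : ℝ) - α * (m : ℝ))) / ((m : ℝ) * α)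
      = (mh : ℝ) + c + e := by
    rw [hcdef, hedef]; field_simp; ring
  have eB : ((mh : ℝ) + (m : ℝ) * (1 - α)) / α = (mh : ℝ) + c := by
    rw [hcdef]; field_simp; ring
  have eD : ((mh : ℝ) + (m : ℝ) * ((m : ℝ) + (mh : ℝ) + (k : ℝ) * α
      - ((m : ℝ) + (mh : ℝ)) * α + 1)) / ((m : ℝ) * α) = (k : ℝ) + c + e := by
    rw [hcdef, hedef]; field_simp; ring
  rw [eA, eB, eD]
  exact (key k hk).2
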